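/- Fix x ∈ ℝⁿ, assume every node has degree mᵢ ≥ 1 and F has full column rank, and let ρ₀ ∈ (0,1). Then the function ρ ↦ T₂(x,ρ) is twice differentiable at ρ₀ and its second derivative at ρ₀ equals 2·s(ρ₀)ᵀ W F [Fᵀ(D−ρ₀W)F]⁻¹ Fᵀ W s(ρ₀), where s(ρ₀) = [Iₙ − F(Fᵀ(D−ρ₀W)F)⁻¹Fᵀ(D−ρ₀W)]x; in particular this second derivative is nonnegative. -/

import Mathlib

open Matrix

/-- Degree of node `i`: `mᵢ = ∑ⱼ Wᵢⱼ`. -/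
noncomputable def degVec {n : ℕ} (W : Matrix (Fin n) (Fin n) ℝ) (i : Fin n) : ℝ := ∑ j, W i j

/-- `R(ρ) = D - ρ W` where `D = diag(m₁,…,mₙ)`. -/
noncomputable def Rmat {n : ℕ} (W : Matrix (Fin n) (Fin n) ℝ) (ρ : ℝ) :
    Matrix (Fin n) (Fin n) ℝ :=
  Matrix.diagonal (degVec W) - ρ • W

/-- `K(ρ) = (D-ρW) - (D-ρW)F[Fᵀ(D-ρW)F]⁻¹Fᵀ(D-ρW)`. -/
noncomputable def Kmat {n p : ℕ} (W : Matrix (Fin n) (Fin n) ℝ)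
    (F : Matrix (Fin n) (Fin (p + 1)) ℝ) (ρ : ℝ) : Matrix (Fin n) (Fin n) ℝ :=
  Rmat W ρ - Rmat W ρ * F * (Fᵀ * Rmat W ρ * F)⁻¹ * Fᵀ * Rmat W ρ

/-- `T(x,ρ) = xᵀ K(ρ) x`. -/
noncomputable def Tcrit {n p : ℕ} (W : Matrix (Fin n) (Fin n) ℝ)
    (F : Matrix (Fin n) (Fin (p + 1)) ℝ) (x : Fin n → ℝ) (ρ : ℝ) : ℝ :=
  x ⬝ᵥ (Kmat W F ρ).mulVec x


/-- `T₂(x,ρ) = xᵀ(D-ρW)F[Fᵀ(D-ρW)F]⁻¹Fᵀ(D-ρW)x`. -/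
noncomputable def T2crit {n p : ℕ} (W : Matrix (Fin n) (Fin n) ℝ)
    (F : Matrix (Fin n) (Fin (p + 1)) ℝ) (x : Fin n → ℝ) (ρ : ℝ) : ℝ :=
  x ⬝ᵥ (Rmat W ρ * F * (Fᵀ * Rmat W ρ * F)⁻¹ * Fᵀ * Rmat W ρ).mulVec x

/-- The residual vector `s(ρ) = [Iₙ - F(Fᵀ(D-ρW)F)⁻¹Fᵀ(D-ρW)]x`. -/
noncomputable def sresid {n p : ℕ} (W : Matrix (Fin n) (Fin n) ℝ)
    (F : Matrix (Fin n) (Fin (p + 1)) ℝ) (x : Fin n → ℝ) (ρ : ℝ) : Fin n → ℝ :=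
  ((1 : Matrix (Fin n) (Fin n) ℝ) - F * (Fᵀ * Rmat W ρ * F)⁻¹ * Fᵀ * Rmat W ρ).mulVec x

attribute [local instance] Matrix.linftyOpNormedRing Matrix.linftyOpNormedAlgebra

noncomputable def entryCLM {m : ℕ} (i j : Fin m) : Matrix (Fin m) (Fin m) ℝ →L[ℝ] ℝ :=
  LinearMap.toContinuousLinearMap
    { toFun := fun M => M i j
      map_add' := fun _ _ => rfl
      map_smul' := fun _ _ => rfl }

lemma hasDerivAt_entry {m : ℕ} {f : ℝ → Matrix (Fin m) (Fin m) ℝ}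
    {f' : Matrix (Fin m) (Fin m) ℝ} {t : ℝ} (h : HasDerivAt f f' t) (i j : Fin m) :
    HasDerivAt (fun s => f s i j) (f' i j) t := by
  have := (entryCLM i j).hasFDerivAt.comp_hasDerivAt t h
  exact this

lemma hasDerivAt_mul_entry {m k l : ℕ} {M1 : ℝ → Matrix (Fin m) (Fin k) ℝ}
    {M2 : ℝ → Matrix (Fin k) (Fin l) ℝ} {M1' : Matrix (Fin m) (Fin k) ℝ}
    {M2' : Matrix (Fin k) (Fin l) ℝ} {t : ℝ}
    (h1 : ∀ i j, HasDerivAt (fun s => M1 s i j) (M1' i j) t)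
    (h2 : ∀ i j, HasDerivAt (fun s => M2 s i j) (M2' i j) t) (i : Fin m) (j : Fin l) :
    HasDerivAt (fun s => (M1 s * M2 s) i j) ((M1' * M2 t + M1 t * M2') i j) t := by
  simp only [Matrix.mul_apply, Matrix.add_apply]
  rw [← Finset.sum_add_distrib]
  exact HasDerivAt.fun_sum fun c _ => (h1 i c).mul (h2 c j)

lemma hasDerivAt_quad {m : ℕ} {u v : ℝ → Fin m → ℝ} {A : ℝ → Matrix (Fin m) (Fin m) ℝ}
    {u' v' : Fin m → ℝ} {A' : Matrix (Fin m) (Fin m) ℝ} {t : ℝ}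
    (hu : ∀ i, HasDerivAt (fun s => u s i) (u' i) t)
    (hv : ∀ i, HasDerivAt (fun s => v s i) (v' i) t)
    (hA : ∀ i j, HasDerivAt (fun s => A s i j) (A' i j) t) :
    HasDerivAt (fun s => u s ⬝ᵥ (A s) *ᵥ v s)
      (u' ⬝ᵥ A t *ᵥ v t + u t ⬝ᵥ A' *ᵥ v t + u t ⬝ᵥ A t *ᵥ v') t := by
  have key : ∀ s : ℝ, u s ⬝ᵥ (A s) *ᵥ v s = ∑ i, ∑ j, u s i * (A s i j * v s j) := by
    intro s; simp [dotProduct, mulVec, Finset.mul_sum]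
  simp only [key]
  have := HasDerivAt.fun_sum (u := Finset.univ) (fun i _ => HasDerivAt.fun_sum (u := Finset.univ)
    (fun j _ => (hu i).mul ((hA i j).mul (hv j))))
  refine this.congr_deriv ?_
  simp [dotProduct, mulVec, Finset.mul_sum, Finset.sum_add_distrib, mul_add, add_mul, add_assoc]

lemma quadW_le {n : ℕ} (W : Matrix (Fin n) (Fin n) ℝ) (hsymm : W.IsSymm)
    (hW0 : ∀ i j, 0 ≤ W i j) (x : Fin n → ℝ) :
    x ⬝ᵥ W *ᵥ x ≤ ∑ i, degVec W i * x i ^ 2 := by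
  have h1 : x ⬝ᵥ W *ᵥ x = ∑ i, ∑ j, W i j * (x i * x j) := by
    simp [dotProduct, mulVec, Finset.mul_sum]; congr 1; funext i; congr 1; funext j; ring
  have h2 : ∀ i j, W i j * (x i * x j) ≤ W i j * ((x i ^ 2 + x j ^ 2) / 2) := by
    intro i j
    exact mul_le_mul_of_nonneg_left (by nlinarith [sq_nonneg (x i - x j)]) (hW0 i j)
  have h3 : (∑ i, ∑ j, W i j * ((x i ^ 2 + x j ^ 2) / 2)) = ∑ i, degVec W i * x i ^ 2 := by
    have hcol : ∀ j, (∑ i, W i j) = degVec W j := by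
      intro j
      simp only [degVec]
      exact Finset.sum_congr rfl fun i _ => by rw [← hsymm.apply i j]
    calc (∑ i, ∑ j, W i j * ((x i ^ 2 + x j ^ 2) / 2))
        = (∑ i, ∑ j, W i j * x i ^ 2 / 2) + ∑ i, ∑ j, W i j * x j ^ 2 / 2 := by
          rw [← Finset.sum_add_distrib]
          refine Finset.sum_congr rfl fun i _ => ?_
          rw [← Finset.sum_add_distrib]
          refine Finset.sum_congr rfl fun j _ => by ring
      _ = (∑ i, degVec W i * x i ^ 2 / 2) + ∑ j, degVec W j * x j ^ 2 / 2 := by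
          congr 1
          · refine Finset.sum_congr rfl fun i _ => ?_
            rw [← Finset.sum_div, ← Finset.sum_mul, degVec]
          · rw [Finset.sum_comm]
            refine Finset.sum_congr rfl fun j _ => ?_
            rw [← Finset.sum_div, ← Finset.sum_mul, hcol j]
      _ = ∑ i, degVec W i * x i ^ 2 := by
          rw [← Finset.sum_add_distrib]
          exact Finset.sum_congr rfl fun i _ => by ring
  calc x ⬝ᵥ W *ᵥ x = ∑ i, ∑ j, W i j * (x i * x j) := h1
    _ ≤ ∑ i, ∑ j, W i j * ((x i ^ 2 + x j ^ 2) / 2) :=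
        Finset.sum_le_sum fun i _ => Finset.sum_le_sum fun j _ => h2 i j
    _ = ∑ i, degVec W i * x i ^ 2 := h3

lemma Rmat_posDef {n : ℕ} (W : Matrix (Fin n) (Fin n) ℝ) (hsymm : W.IsSymm)
    (hW0 : ∀ i j, 0 ≤ W i j) (hdeg : ∀ i, 1 ≤ degVec W i) {ρ : ℝ}
    (hρ : ρ ∈ Set.Ioo (0 : ℝ) 1) : (Rmat W ρ).PosDef := by
  apply Matrix.PosDef.of_dotProduct_mulVec_pos
  · show (Rmat W ρ)ᴴ = Rmat W ρ
    simp only [Rmat, conjTranspose_sub, conjTranspose_smul]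
    rw [show (Matrix.diagonal (degVec W))ᴴ = Matrix.diagonal (degVec W) by
      simp [conjTranspose, Matrix.transpose_map, Matrix.diagonal_transpose, Matrix.diagonal_map]]
    rw [show Wᴴ = W by rw [Matrix.conjTranspose_eq_transpose_of_trivial]; exact hsymm.eq]
    simp
  · intro x hx
    have hq : star x ⬝ᵥ (Rmat W ρ) *ᵥ x = (∑ i, degVec W i * x i ^ 2) - ρ * (x ⬝ᵥ W *ᵥ x) := by
      simp only [Rmat, Matrix.sub_mulVec, dotProduct_sub, Matrix.smul_mulVec,
        dotProduct_smul, star_trivial, smul_eq_mul]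
      congr 1
      simp [dotProduct, Matrix.mulVec_diagonal]
      exact Finset.sum_congr rfl fun i _ => by ring
    rw [hq]
    have hW := quadW_le W hsymm hW0 x
    have hsum : (0:ℝ) < ∑ i, x i ^ 2 := by
      have : ∃ i, x i ≠ 0 := by
        by_contra h
        push_neg at h
        exact hx (funext h)
      obtain ⟨i, hi⟩ := this
      exact Finset.sum_pos' (fun j _ => sq_nonneg _) ⟨i, Finset.mem_univ i, by positivity⟩
    have hdsum : (∑ i, x i ^ 2) ≤ ∑ i, degVec W i * x i ^ 2 :=
      Finset.sum_le_sum fun i _ => by nlinarith [hdeg i, sq_nonneg (x i)]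
    obtain ⟨hρ0, hρ1⟩ := hρ
    nlinarith

lemma mulVec_injective_of_rank {n p : ℕ} (F : Matrix (Fin n) (Fin (p + 1)) ℝ)
    (hF : F.rank = p + 1) : ∀ v : Fin (p+1) → ℝ, F *ᵥ v = 0 → v = 0 := by
  intro v hv
  have hker : LinearMap.ker F.mulVecLin = ⊥ := by
    have h1 := LinearMap.finrank_range_add_finrank_ker F.mulVecLin
    rw [show Module.finrank ℝ (LinearMap.range F.mulVecLin) = p + 1 from hF] at h1
    simp only [Module.finrank_pi, Fintype.card_fin] at h1
    have : Module.finrank ℝ (LinearMap.ker F.mulVecLin) = 0 := by omega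
    exact Submodule.finrank_eq_zero.mp this
  have : v ∈ LinearMap.ker F.mulVecLin := by simpa [Matrix.mulVecLin_apply] using hv
  rw [hker] at this
  simpa using this

lemma dot_transpose {k l : ℕ} (M : Matrix (Fin k) (Fin l) ℝ) (v : Fin l → ℝ) (w : Fin k → ℝ) :
    v ⬝ᵥ (Mᵀ *ᵥ w) = (M *ᵥ v) ⬝ᵥ w := by
  rw [Matrix.dotProduct_mulVec, Matrix.vecMul_transpose]

lemma dot_mulVec_left {k l : ℕ} (M : Matrix (Fin k) (Fin l) ℝ) (v : Fin k → ℝ) (w : Fin l → ℝ) :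
    v ⬝ᵥ (M *ᵥ w) = (Mᵀ *ᵥ v) ⬝ᵥ w := by
  conv_lhs => rw [← Matrix.transpose_transpose M]
  exact dot_transpose Mᵀ v w

lemma quad_conj {k l : ℕ} (M : Matrix (Fin k) (Fin l) ℝ) (G : Matrix (Fin l) (Fin l) ℝ)
    (x : Fin k → ℝ) :
    x ⬝ᵥ (M * G * Mᵀ) *ᵥ x = (Mᵀ *ᵥ x) ⬝ᵥ G *ᵥ (Mᵀ *ᵥ x) := by
  rw [← Matrix.mulVec_mulVec, ← Matrix.mulVec_mulVec, dot_mulVec_left]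

lemma posDef_conj {n q : ℕ} {R : Matrix (Fin n) (Fin n) ℝ} (hR : R.PosDef)
    (F : Matrix (Fin n) (Fin q) ℝ) (hinj : ∀ v : Fin q → ℝ, F *ᵥ v = 0 → v = 0) :
    (Fᵀ * R * F).PosDef := by
  apply Matrix.PosDef.of_dotProduct_mulVec_pos
  · show (Fᵀ * R * F)ᴴ = _
    have hRt : Rᵀ = R := hR.1
    have : ∀ {a b : ℕ} (M : Matrix (Fin a) (Fin b) ℝ), Mᴴ = Mᵀ := fun M => by
      ext i j; simp [conjTranspose_apply]
    rw [this, Matrix.transpose_mul, Matrix.transpose_mul, Matrix.transpose_transpose, hRt,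
      Matrix.mul_assoc]
  · intro v hv
    have h1 : star v ⬝ᵥ (Fᵀ * R * F) *ᵥ v = (F *ᵥ v) ⬝ᵥ R *ᵥ (F *ᵥ v) := by
      rw [star_trivial, ← Matrix.mulVec_mulVec, ← Matrix.mulVec_mulVec, dot_transpose]
    rw [h1]
    have hFv : F *ᵥ v ≠ 0 := fun h => hv (hinj v h)
    simpa using hR.dotProduct_mulVec_pos hFv

/-- `ρ ↦ T₂(x,ρ)` is twice differentiable at `ρ₀ ∈ (0,1)`, its second
derivative there equals `2·s(ρ₀)ᵀ W F [Fᵀ(D-ρ₀W)F]⁻¹ Fᵀ W s(ρ₀)`, which is nonnegative. -/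
theorem second_deriv_T2 {n p : ℕ} (W : Matrix (Fin n) (Fin n) ℝ)
    (hWsymm : W.IsSymm) (hW01 : ∀ i j, W i j = 0 ∨ W i j = 1) (hWdiag : ∀ i, W i i = 0)
    (hdeg : ∀ i, 1 ≤ degVec W i)
    (F : Matrix (Fin n) (Fin (p + 1)) ℝ) (hF : F.rank = p + 1)
    (x : Fin n → ℝ) (ρ₀ : ℝ) (hρ₀ : ρ₀ ∈ Set.Ioo (0 : ℝ) 1) :
    DifferentiableAt ℝ (fun ρ => T2crit W F x ρ) ρ₀ ∧
    DifferentiableAt ℝ (deriv (fun ρ => T2crit W F x ρ)) ρ₀ ∧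
    deriv (deriv (fun ρ => T2crit W F x ρ)) ρ₀ =
      2 * (sresid W F x ρ₀ ⬝ᵥ
        (W * F * (Fᵀ * Rmat W ρ₀ * F)⁻¹ * Fᵀ * W).mulVec (sresid W F x ρ₀)) ∧
    0 ≤ 2 * (sresid W F x ρ₀ ⬝ᵥ
        (W * F * (Fᵀ * Rmat W ρ₀ * F)⁻¹ * Fᵀ * W).mulVec (sresid W F x ρ₀)) := by
  have hW0 : ∀ i j, 0 ≤ W i j := fun i j => by rcases hW01 i j with h | h <;> simp [h]
  -- symmetry of Rmat
  have hRsymm : ∀ t : ℝ, (Rmat W t)ᵀ = Rmat W t := by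
    intro t
    simp [Rmat, Matrix.transpose_sub, Matrix.transpose_smul, Matrix.diagonal_transpose, hWsymm.eq]
  set C : Matrix (Fin (p+1)) (Fin (p+1)) ℝ := Fᵀ * W * F with hC
  set N : ℝ → Matrix (Fin (p+1)) (Fin (p+1)) ℝ := fun t => Fᵀ * Rmat W t * F with hN
  set A : ℝ → Matrix (Fin (p+1)) (Fin (p+1)) ℝ := fun t => (N t)⁻¹ with hA
  have hCsymm : Cᵀ = C := by
    simp [hC, Matrix.transpose_mul, Matrix.transpose_transpose, hWsymm.eq, Matrix.mul_assoc]
  have hNsymm : ∀ t, (N t)ᵀ = N t := by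
    intro t
    simp [hN, Matrix.transpose_mul, Matrix.transpose_transpose, hRsymm t, Matrix.mul_assoc]
  have hinj := mulVec_injective_of_rank F hF
  have hNpd : ∀ t ∈ Set.Ioo (0:ℝ) 1, (N t).PosDef := fun t ht =>
    posDef_conj (Rmat_posDef W hWsymm hW0 hdeg ht) F hinj
  have hNunit : ∀ t ∈ Set.Ioo (0:ℝ) 1, IsUnit (N t) := fun t ht => (hNpd t ht).isUnit
  have hAsymm : ∀ t, (A t)ᵀ = A t := by
    intro t
    rw [hA]
    simp only
    rw [Matrix.transpose_nonsing_inv, hNsymm t]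
  -- derivative of N
  have hNderiv : ∀ t : ℝ, HasDerivAt N (-C) t := by
    intro t
    have hfun : N = fun s : ℝ => (Fᵀ * Matrix.diagonal (degVec W) * F) - s • C := by
      funext s
      simp only [hN, hC, Rmat, Matrix.mul_sub, Matrix.sub_mul, Matrix.mul_smul, Matrix.smul_mul]
    rw [hfun]
    have h := (hasDerivAt_const t (Fᵀ * Matrix.diagonal (degVec W) * F)).fun_sub
      ((hasDerivAt_id t).smul_const C)
    simp at h
    exact h
  -- derivative of A on Ioo
  have hAderiv : ∀ t ∈ Set.Ioo (0:ℝ) 1, HasDerivAt A (A t * C * A t) t := by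
    intro t ht
    have hu := (hNunit t ht)
    have h1 := (hasFDerivAt_ringInverse (𝕜 := ℝ) hu.unit).comp_hasDerivAt_of_eq t
      (hNderiv t) hu.unit_spec.symm
    have hfun : (fun s => Ring.inverse (N s)) = A := by
      funext s
      rw [hA]
      simp only
      rw [Matrix.nonsing_inv_eq_ringInverse]
    have hval : (-(ContinuousLinearMap.mulLeftRight ℝ _ (↑hu.unit⁻¹) (↑hu.unit⁻¹))) (-C)
        = A t * C * A t := by
      simp only [ContinuousLinearMap.neg_apply, ContinuousLinearMap.mulLeftRight_apply]
      rw [Matrix.coe_units_inv, hu.unit_spec]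
      simp only [Matrix.mul_neg, Matrix.neg_mul, neg_neg, hA]
    have h2 : HasDerivAt (fun s => Ring.inverse (N s)) (A t * C * A t) t := by
      rw [← hval]
      exact h1
    exact h2.congr_of_eventuallyEq (Filter.Eventually.of_forall fun s => (congrFun hfun s).symm)
  have hAe : ∀ t ∈ Set.Ioo (0:ℝ) 1, ∀ i j,
      HasDerivAt (fun s => A s i j) ((A t * C * A t) i j) t :=
    fun t ht i j => hasDerivAt_entry (hAderiv t ht) i j
  -- the vector u
  set a : Fin (p+1) → ℝ := (Fᵀ * Matrix.diagonal (degVec W)) *ᵥ x with ha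
  set b : Fin (p+1) → ℝ := (Fᵀ * W) *ᵥ x with hb
  set u : ℝ → Fin (p+1) → ℝ := fun t => (Fᵀ * Rmat W t) *ᵥ x with hu
  have hufun : ∀ s : ℝ, u s = a - s • b := by
    intro s
    rw [hu, ha, hb]
    simp only [Rmat, Matrix.mul_sub, Matrix.mul_smul, Matrix.sub_mulVec,
      Matrix.smul_mulVec]
  have hue : ∀ t : ℝ, ∀ i, HasDerivAt (fun s => u s i) (-b i) t := by
    intro t i
    have : (fun s : ℝ => u s i) = fun s : ℝ => a i - s * b i := by
      funext s; rw [hufun s]; simp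
    rw [this]
    simpa using (hasDerivAt_const t (a i)).fun_sub ((hasDerivAt_id t).mul_const (b i))
  -- T2crit as quadratic form in u
  have htop : (fun ρ => T2crit W F x ρ) = fun s => u s ⬝ᵥ (A s) *ᵥ u s := by
    funext s
    simp only [T2crit]
    have hMt : (Rmat W s * F)ᵀ = Fᵀ * Rmat W s := by
      rw [Matrix.transpose_mul, hRsymm s]
    have hassoc : Rmat W s * F * (Fᵀ * Rmat W s * F)⁻¹ * Fᵀ * Rmat W s
        = (Rmat W s * F) * A s * (Rmat W s * F)ᵀ := by
      rw [hMt, hA, hN]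
      simp only [Matrix.mul_assoc]
    rw [hassoc, quad_conj, hMt]
  -- first derivative function
  set B : ℝ → Matrix (Fin (p+1)) (Fin (p+1)) ℝ := fun t => A t * C * A t with hB
  set D1 : ℝ → ℝ := fun t =>
    (-b) ⬝ᵥ A t *ᵥ u t + u t ⬝ᵥ (B t) *ᵥ u t + u t ⬝ᵥ A t *ᵥ (-b) with hD1def
  have hD1 : ∀ t ∈ Set.Ioo (0:ℝ) 1, HasDerivAt (fun ρ => T2crit W F x ρ) (D1 t) t := by
    intro t ht
    rw [htop]
    exact hasDerivAt_quad (hue t) (hue t) (hAe t ht)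
  have hdiff1 : DifferentiableAt ℝ (fun ρ => T2crit W F x ρ) ρ₀ :=
    (hD1 ρ₀ hρ₀).differentiableAt
  have hmem : Set.Ioo (0:ℝ) 1 ∈ nhds ρ₀ := isOpen_Ioo.mem_nhds hρ₀
  have hEq : deriv (fun ρ => T2crit W F x ρ) =ᶠ[nhds ρ₀] D1 :=
    Filter.eventuallyEq_of_mem hmem (fun t ht => (hD1 t ht).deriv)
  -- entrywise derivative of B at ρ₀
  have hCe : ∀ i j, HasDerivAt (fun _ : ℝ => C i j) ((0 : Matrix (Fin (p+1)) (Fin (p+1)) ℝ) i j) ρ₀ := by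
    intro i j; simpa using hasDerivAt_const ρ₀ (C i j)
  have hACe : ∀ i j, HasDerivAt (fun s => (A s * C) i j)
      (((A ρ₀ * C * A ρ₀ * C + A ρ₀ * 0 : Matrix (Fin (p+1)) (Fin (p+1)) ℝ)) i j) ρ₀ :=
    fun i j => hasDerivAt_mul_entry (hAe ρ₀ hρ₀) hCe i j
  have hBe : ∀ i j, HasDerivAt (fun s => B s i j)
      (((A ρ₀ * C * A ρ₀ * C + A ρ₀ * 0) * A ρ₀ + (A ρ₀ * C) * (A ρ₀ * C * A ρ₀)
        : Matrix (Fin (p+1)) (Fin (p+1)) ℝ) i j) ρ₀ := by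
    intro i j
    rw [hB]
    exact hasDerivAt_mul_entry hACe (hAe ρ₀ hρ₀) i j
  -- second derivative
  have hq1 : HasDerivAt (fun t => (-b) ⬝ᵥ A t *ᵥ u t)
      ((0 : Fin (p+1) → ℝ) ⬝ᵥ A ρ₀ *ᵥ u ρ₀ + (-b) ⬝ᵥ (A ρ₀ * C * A ρ₀) *ᵥ u ρ₀
        + (-b) ⬝ᵥ A ρ₀ *ᵥ (-b)) ρ₀ :=
    hasDerivAt_quad (fun i => by simpa using hasDerivAt_const ρ₀ ((-b) i)) (hue ρ₀) (hAe ρ₀ hρ₀)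
  have hq2 : HasDerivAt (fun t => u t ⬝ᵥ (B t) *ᵥ u t)
      ((-b) ⬝ᵥ B ρ₀ *ᵥ u ρ₀
        + u ρ₀ ⬝ᵥ ((A ρ₀ * C * A ρ₀ * C + A ρ₀ * 0) * A ρ₀ + (A ρ₀ * C) * (A ρ₀ * C * A ρ₀)) *ᵥ u ρ₀
        + u ρ₀ ⬝ᵥ B ρ₀ *ᵥ (-b)) ρ₀ :=
    hasDerivAt_quad (hue ρ₀) (hue ρ₀) hBe
  have hq3 : HasDerivAt (fun t => u t ⬝ᵥ A t *ᵥ (-b))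
      ((-b) ⬝ᵥ A ρ₀ *ᵥ (-b) + u ρ₀ ⬝ᵥ (A ρ₀ * C * A ρ₀) *ᵥ (-b)
        + u ρ₀ ⬝ᵥ A ρ₀ *ᵥ (0 : Fin (p+1) → ℝ)) ρ₀ :=
    hasDerivAt_quad (hue ρ₀) (fun i => by simpa using hasDerivAt_const ρ₀ ((-b) i)) (hAe ρ₀ hρ₀)
  have hD1deriv : HasDerivAt D1 (((0 : Fin (p+1) → ℝ) ⬝ᵥ A ρ₀ *ᵥ u ρ₀ + (-b) ⬝ᵥ (A ρ₀ * C * A ρ₀) *ᵥ u ρ₀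
        + (-b) ⬝ᵥ A ρ₀ *ᵥ (-b)) + ((-b) ⬝ᵥ B ρ₀ *ᵥ u ρ₀
        + u ρ₀ ⬝ᵥ ((A ρ₀ * C * A ρ₀ * C + A ρ₀ * 0) * A ρ₀ + (A ρ₀ * C) * (A ρ₀ * C * A ρ₀)) *ᵥ u ρ₀
        + u ρ₀ ⬝ᵥ B ρ₀ *ᵥ (-b)) + ((-b) ⬝ᵥ A ρ₀ *ᵥ (-b) + u ρ₀ ⬝ᵥ (A ρ₀ * C * A ρ₀) *ᵥ (-b)
        + u ρ₀ ⬝ᵥ A ρ₀ *ᵥ (0 : Fin (p+1) → ℝ))) ρ₀ := by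
    rw [hD1def]
    exact (hq1.add hq2).add hq3
  have hdiff2 : DifferentiableAt ℝ (deriv (fun ρ => T2crit W F x ρ)) ρ₀ :=
    (hD1deriv.differentiableAt).congr_of_eventuallyEq hEq
  -- identify sresid-based expression
  have hyv : (Fᵀ * W) *ᵥ (sresid W F x ρ₀) = b - C *ᵥ (A ρ₀ *ᵥ u ρ₀) := by
    rw [sresid, Matrix.mulVec_mulVec, Matrix.mul_sub, Matrix.mul_one]
    rw [Matrix.sub_mulVec, hb]
    congr 1
    rw [hC, hA, hu]
    simp only [hN, Matrix.mul_assoc, Matrix.mulVec_mulVec]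
  have htarget : sresid W F x ρ₀ ⬝ᵥ
      (W * F * (Fᵀ * Rmat W ρ₀ * F)⁻¹ * Fᵀ * W).mulVec (sresid W F x ρ₀)
      = (b - C *ᵥ (A ρ₀ *ᵥ u ρ₀)) ⬝ᵥ A ρ₀ *ᵥ (b - C *ᵥ (A ρ₀ *ᵥ u ρ₀)) := by
    have hMt : (W * F)ᵀ = Fᵀ * W := by
      rw [Matrix.transpose_mul, hWsymm.eq]
    have hassoc : W * F * (Fᵀ * Rmat W ρ₀ * F)⁻¹ * Fᵀ * W = (W * F) * A ρ₀ * (W * F)ᵀ := by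
      rw [hMt, hA, hN]
      simp only [Matrix.mul_assoc]
    rw [hassoc, quad_conj, hMt, hyv]
  -- nonnegativity
  have hApd : (A ρ₀).PosDef := by
    rw [hA]
    exact (hNpd ρ₀ hρ₀).inv
  have hnonneg : ∀ w : Fin (p+1) → ℝ, 0 ≤ w ⬝ᵥ A ρ₀ *ᵥ w := by
    intro w
    rcases eq_or_ne w 0 with h | h
    · simp [h]
    · exact le_of_lt (by simpa using hApd.dotProduct_mulVec_pos h)
  -- key dot rewrites
  have key1 : ∀ w : Fin (p+1) → ℝ, u ρ₀ ⬝ᵥ (A ρ₀ *ᵥ w) = (A ρ₀ *ᵥ u ρ₀) ⬝ᵥ w := by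
    intro w
    conv_lhs => rw [← hAsymm ρ₀]
    exact dot_transpose (A ρ₀) (u ρ₀) w
  have key2 : ∀ (v : Fin (p+1) → ℝ) (w : Fin (p+1) → ℝ), v ⬝ᵥ (C *ᵥ w) = (C *ᵥ v) ⬝ᵥ w := by
    intro v w
    conv_lhs => rw [← hCsymm]
    exact dot_transpose C v w
  refine ⟨hdiff1, hdiff2, ?_, ?_⟩
  swap
  · rw [htarget]
    have := hnonneg (b - C *ᵥ (A ρ₀ *ᵥ u ρ₀))
    linarith
  rw [hEq.deriv_eq, hD1deriv.deriv, htarget]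
  simp only [hB, Matrix.mul_zero, add_zero, Matrix.add_mulVec, dotProduct_add,
    ← Matrix.mulVec_mulVec, Matrix.mulVec_neg, neg_dotProduct, dotProduct_neg,
    zero_dotProduct, Matrix.mulVec_zero, dotProduct_zero,
    Matrix.mulVec_sub, dotProduct_sub, sub_dotProduct, key1, key2]
  ring
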